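/- Let θ : [0,L] → ℝ be Lipschitz with θ(0)=0, θ(L)=π, generating an axisymmetric C^{1,1} surface (x(s)=∫₀ˢcos θ > 0 on (0,L), x(L)=0), and let θ⋆ be its folding into [0,π] (so cos θ⋆ = cos θ, sin θ⋆ = |sin θ|). Then ∫₀ᴸ |sin θ(s) + θ'(s)x(s)| ds ≥ ∫₀ᴸ (sin θ⋆(s) + (θ⋆)'(s)·x(s)) ds, where both sides use the same x since x⋆ = x. -/
import Mathlib


open Real Set intervalIntegral

/-- The folding of a real number into `[0, π]`: the distance from `y` to the
nearest multiple of `2π`.  It coincides with the piecewise description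
`y - 2kπ` for `y ∈ [2kπ, (2k+1)π)` and `2kπ - y` for `y ∈ [(2k-1)π, 2kπ)`. -/
noncomputable def fold (y : ℝ) : ℝ :=
  |y - 2 * Real.pi * (round (y / (2 * Real.pi)) : ℤ)|

open MeasureTheory Filter

lemma abs_sub_round_le (x : ℝ) (m : ℤ) : |x - round x| ≤ |x - m| := by
  rcases eq_or_ne m (round x) with h | h
  · rw [h]
  · have h1 : (1:ℝ) ≤ |(round x : ℝ) - m| := by
      have h0 : round x - m ≠ 0 := sub_ne_zero.mpr (Ne.symm h)
      have := Int.one_le_abs h0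
      exact_mod_cast (by exact_mod_cast this : (1:ℝ) ≤ |((round x - m : ℤ) : ℝ)|)
    have h2 := abs_sub_round x
    have h3 : |(round x : ℝ) - m| ≤ |x - round x| + |x - m| := by
      have := abs_sub_le ((round x : ℝ)) x (m : ℝ)
      calc |(round x : ℝ) - m| ≤ |(round x : ℝ) - x| + |x - m| := abs_sub_le _ _ _
        _ = |x - round x| + |x - m| := by rw [abs_sub_comm]
    linarith

lemma fold_eq (y : ℝ) (k : ℤ) : |y - 2 * π * k| = (2*π) * |y/(2*π) - k| := by
  have hπ : (0:ℝ) < 2 * π := by positivity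
  have he : y - 2*π*k = (2*π)*(y/(2*π)-k) := by field_simp
  rw [he, abs_mul, abs_of_pos hπ]

lemma fold_le (y : ℝ) (k : ℤ) : fold y ≤ |y - 2 * π * k| := by
  have hπ : (0:ℝ) < 2 * π := by positivity
  rw [fold, fold_eq, fold_eq]
  exact mul_le_mul_of_nonneg_left (abs_sub_round_le _ _) hπ.le

lemma fold_dist (a b : ℝ) : |fold a - fold b| ≤ |a - b| := by
  have key : ∀ a b : ℝ, fold a - fold b ≤ |a - b| := by
    intro a b
    have h1 : fold a ≤ |a - 2*π*(round (b/(2*π)) : ℤ)| := fold_le a _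
    have h2 : |a - 2*π*(round (b/(2*π)) : ℤ)| ≤ |a - b| + |b - 2*π*(round (b/(2*π)) : ℤ)| :=
      abs_sub_le _ _ _
    have h3 : fold b = |b - 2*π*(round (b/(2*π)) : ℤ)| := rfl
    linarith
  exact abs_sub_le_iff.mpr ⟨key a b, by simpa [abs_sub_comm] using key b a⟩

lemma fold_lip : LipschitzWith 1 fold := by
  refine LipschitzWith.of_dist_le_mul fun a b => ?_
  rw [Real.dist_eq, Real.dist_eq, NNReal.coe_one, one_mul]
  exact fold_dist a b

lemma fold_mem (y : ℝ) : fold y ∈ Icc 0 π := by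
  have hπ : (0:ℝ) < 2 * π := by positivity
  refine ⟨abs_nonneg _, ?_⟩
  rw [fold, fold_eq]
  calc (2*π) * |y/(2*π) - round (y/(2*π))| ≤ (2*π) * (1/2) :=
        mul_le_mul_of_nonneg_left (abs_sub_round _) hπ.le
    _ = π := by ring

lemma sin_fold (y : ℝ) : Real.sin (fold y) = |Real.sin y| := by
  set k := round (y / (2*π)) with hk
  have h1 : Real.sin (y - 2*π*k) = Real.sin y := by
    have h := Real.sin_add_int_mul_two_pi (y - 2*π*k) k
    have he : y - 2*π*k + k*(2*π) = y := by ring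
    rw [he] at h; exact h.symm
  have h2 : |Real.sin (fold y)| = |Real.sin y| := by
    rw [fold, ← hk]
    rcases abs_choice (y - 2*π*k) with h | h
    · rw [h, h1]
    · rw [h, Real.sin_neg, abs_neg, h1]
  have h3 : 0 ≤ Real.sin (fold y) :=
    Real.sin_nonneg_of_nonneg_of_le_pi (fold_mem y).1 (fold_mem y).2
  rw [← h2, abs_of_nonneg h3]

lemma round_eq_of_abs_lt {x : ℝ} {k : ℤ} (h : |x - k| < 1/2) : round x = k := by
  rw [round_eq, Int.floor_eq_iff]
  rcases abs_lt.mp h with ⟨h1, h2⟩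
  constructor <;> push_cast <;> linarith

lemma abs_deriv_le {f g : ℝ → ℝ} {s a b : ℝ} (hf : HasDerivAt f a s) (hg : HasDerivAt g b s)
    (h : ∀ t, |f t - f s| ≤ |g t - g s|) : |a| ≤ |b| := by
  have hf' := hasDerivAt_iff_tendsto_slope.mp hf
  have hg' := hasDerivAt_iff_tendsto_slope.mp hg
  refine le_of_tendsto_of_tendsto hf'.abs hg'.abs ?_
  filter_upwards [self_mem_nhdsWithin] with t ht
  have hts : t ≠ s := ht
  rw [slope_def_field, slope_def_field, abs_div, abs_div]
  have hpos : 0 < |t - s| := abs_pos.mpr (sub_ne_zero.mpr hts)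
  exact (div_le_div_iff_of_pos_right hpos).mpr (h t)

lemma abs_deriv_le_lip {f : ℝ → ℝ} {K : NNReal} (hf : LipschitzWith K f) (s : ℝ) :
    |deriv f s| ≤ K := by
  by_cases h : DifferentiableAt ℝ f s
  · have hg : HasDerivAt (fun t : ℝ => (K:ℝ) * t) ((K:ℝ) * 1) s := (hasDerivAt_id s).const_mul _
    rw [mul_one] at hg
    have hb := abs_deriv_le h.hasDerivAt hg (fun t => by
      have := hf.dist_le_mul t s
      rw [Real.dist_eq, Real.dist_eq] at this
      calc |f t - f s| ≤ K * |t - s| := this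
        _ = |(K:ℝ) * t - (K:ℝ) * s| := by rw [← mul_sub, abs_mul, abs_of_nonneg K.coe_nonneg]
        )
    calc |deriv f s| ≤ |(K:ℝ)| := hb
      _ = K := abs_of_nonneg K.coe_nonneg
  · rw [deriv_zero_of_not_differentiableAt h]; simp

theorem stmt_16 (L : ℝ) (hL : 0 < L) (θ : ℝ → ℝ) (K : NNReal)
    (hθ : LipschitzOnWith K θ (Set.Icc 0 L))
    (h0 : θ 0 = 0) (hLval : θ L = Real.pi)
    (hxL : (∫ t in (0:ℝ)..L, Real.cos (θ t)) = 0)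
    (hxpos : ∀ s ∈ Set.Ioo (0:ℝ) L, 0 < ∫ t in (0:ℝ)..s, Real.cos (θ t)) :
    ∫ s in (0:ℝ)..L,
        (Real.sin (fold (θ s))
          + deriv (fun t => fold (θ t)) s * ∫ t in (0:ℝ)..s, Real.cos (θ t))
      ≤ ∫ s in (0:ℝ)..L,
        |Real.sin (θ s) + deriv θ s * ∫ t in (0:ℝ)..s, Real.cos (θ t)| := by
  obtain ⟨ψ, hψK, hψeq⟩ := hθ.extend_real
  set x : ℝ → ℝ := fun s => ∫ t in (0:ℝ)..s, Real.cos (ψ t) with hxdef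
  have hψc : Continuous ψ := hψK.continuous
  have hcont : Continuous fun t => Real.cos (ψ t) := Real.continuous_cos.comp hψc
  have hxcont : Continuous x :=
    intervalIntegral.continuous_primitive (fun a b => hcont.intervalIntegrable a b) 0
  have hxeq : ∀ s ∈ Icc (0:ℝ) L, (∫ t in (0:ℝ)..s, Real.cos (θ t)) = x s := by
    intro s hs
    refine intervalIntegral.integral_congr fun t ht => ?_
    rw [uIcc_of_le hs.1] at ht
    exact congrArg Real.cos (hψeq ⟨ht.1, ht.2.trans hs.2⟩)
  have hxbd : ∀ s ∈ Icc (0:ℝ) L, |x s| ≤ L := by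
    intro s hs
    have := intervalIntegral.norm_integral_le_of_norm_le_const
      (C := 1) (f := fun t => Real.cos (ψ t)) (a := 0) (b := s)
      (fun t _ => by simpa using Real.abs_cos_le_one (ψ t))
    rw [Real.norm_eq_abs] at this
    calc |x s| ≤ 1 * |s - 0| := this
      _ = |s| := by ring_nf
      _ = s := abs_of_nonneg hs.1
      _ ≤ L := hs.2
  set F : ℝ → ℝ := fun t => fold (ψ t) with hFdef
  have hFlip : LipschitzWith (1 * K) F := fold_lip.comp hψK
  have hFc : Continuous F := hFlip.continuous
  -- the two integrands over ψ
  set f : ℝ → ℝ := fun s => Real.sin (F s) + deriv F s * x s with hfdef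
  set g : ℝ → ℝ := fun s => |Real.sin (ψ s) + deriv ψ s * x s| with hgdef
  have haeL : ∀ᵐ s : ℝ, s ≠ L := by
    have : (volume : Measure ℝ) {L} = 0 := measure_singleton L
    filter_upwards [measure_eq_zero_iff_ae_notMem.mp this] with s hs
    simpa using hs
  have hIoo_eq : ∀ s ∈ Ioo (0:ℝ) L,
      (Real.sin (fold (θ s)) + deriv (fun t => fold (θ t)) s * ∫ t in (0:ℝ)..s, Real.cos (θ t))
        = f s ∧
      |Real.sin (θ s) + deriv θ s * ∫ t in (0:ℝ)..s, Real.cos (θ t)| = g s := by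
    intro s hs
    have hnb : Icc (0:ℝ) L ∈ nhds s := Icc_mem_nhds hs.1 hs.2
    have hev : θ =ᶠ[nhds s] ψ := eventually_of_mem hnb hψeq
    have hevF : (fun t => fold (θ t)) =ᶠ[nhds s] F := by
      filter_upwards [hev] with t ht
      simp [hFdef, ht]
    have hsIcc : s ∈ Icc (0:ℝ) L := ⟨hs.1.le, hs.2.le⟩
    have hθψ : θ s = ψ s := hψeq hsIcc
    constructor
    · rw [hxeq s hsIcc, hevF.deriv_eq, hθψ]
    · rw [hxeq s hsIcc, hev.deriv_eq, hθψ]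
  -- rewrite both integrals
  have hL1 : (∫ s in (0:ℝ)..L,
        (Real.sin (fold (θ s))
          + deriv (fun t => fold (θ t)) s * ∫ t in (0:ℝ)..s, Real.cos (θ t)))
      = ∫ s in (0:ℝ)..L, f s := by
    refine intervalIntegral.integral_congr_ae ?_
    filter_upwards [haeL] with s hsL hsI
    rw [uIoc_of_le hL.le] at hsI
    exact (hIoo_eq s ⟨hsI.1, lt_of_le_of_ne hsI.2 hsL⟩).1
  have hL2 : (∫ s in (0:ℝ)..L,
        |Real.sin (θ s) + deriv θ s * ∫ t in (0:ℝ)..s, Real.cos (θ t)|)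
      = ∫ s in (0:ℝ)..L, g s := by
    refine intervalIntegral.integral_congr_ae ?_
    filter_upwards [haeL] with s hsL hsI
    rw [uIoc_of_le hL.le] at hsI
    exact (hIoo_eq s ⟨hsI.1, lt_of_le_of_ne hsI.2 hsL⟩).2
  rw [hL1, hL2]
  -- integrability
  have hIccfin : (volume : Measure ℝ) (Icc (0:ℝ) L) ≠ ⊤ := measure_Icc_lt_top.ne
  have hmf : Measurable f :=
    ((Real.continuous_sin.comp hFc).measurable).add ((measurable_deriv F).mul hxcont.measurable)
  have hmg : Measurable g :=
    (((Real.continuous_sin.comp hψc).measurable).add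
      ((measurable_deriv ψ).mul hxcont.measurable)).abs
  have hbd : ∀ s ∈ Icc (0:ℝ) L, |Real.sin (ψ s) + deriv ψ s * x s| ≤ 1 + K * L ∧
      |Real.sin (F s) + deriv F s * x s| ≤ 1 + K * L := by
    intro s hs
    have hxs := hxbd s hs
    have hdg : |deriv ψ s| ≤ K := abs_deriv_le_lip hψK s
    have hdf : |deriv F s| ≤ K := by
      have := abs_deriv_le_lip hFlip s
      simpa using this
    constructor
    · calc |Real.sin (ψ s) + deriv ψ s * x s| ≤ |Real.sin (ψ s)| + |deriv ψ s| * |x s| := by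
            rw [← abs_mul]; exact abs_add_le _ _
        _ ≤ 1 + K * L := by
            have h1 := Real.abs_sin_le_one (ψ s)
            have : |deriv ψ s| * |x s| ≤ K * L :=
              mul_le_mul hdg hxs (abs_nonneg _) K.coe_nonneg
            linarith
    · calc |Real.sin (F s) + deriv F s * x s| ≤ |Real.sin (F s)| + |deriv F s| * |x s| := by
            rw [← abs_mul]; exact abs_add_le _ _
        _ ≤ 1 + K * L := by
            have h1 := Real.abs_sin_le_one (F s)
            have : |deriv F s| * |x s| ≤ K * L :=
              mul_le_mul hdf hxs (abs_nonneg _) K.coe_nonneg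
            linarith
  have hintf : IntervalIntegrable f volume 0 L := by
    rw [intervalIntegrable_iff, uIoc_of_le hL.le]
    refine (Measure.integrableOn_of_bounded hIccfin hmf.aestronglyMeasurable
      (M := 1 + K * L) ?_).mono_set Ioc_subset_Icc_self
    filter_upwards [ae_restrict_mem measurableSet_Icc] with s hs
    rw [Real.norm_eq_abs]
    exact (hbd s hs).2
  have hintg : IntervalIntegrable g volume 0 L := by
    rw [intervalIntegrable_iff, uIoc_of_le hL.le]
    refine (Measure.integrableOn_of_bounded hIccfin hmg.aestronglyMeasurable
      (M := 1 + K * L) ?_).mono_set Ioc_subset_Icc_self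
    filter_upwards [ae_restrict_mem measurableSet_Icc] with s hs
    rw [Real.norm_eq_abs, hgdef, abs_abs]
    exact (hbd s hs).1
  refine intervalIntegral.integral_mono_ae_restrict hL.le hintf hintg ?_
  rw [Filter.EventuallyLE, MeasureTheory.ae_restrict_iff' measurableSet_Icc]
  have hae0 : ∀ᵐ s : ℝ, s ≠ 0 := by
    have : (volume : Measure ℝ) {(0:ℝ)} = 0 := measure_singleton 0
    filter_upwards [measure_eq_zero_iff_ae_notMem.mp this] with s hs
    simpa using hs
  filter_upwards [hψK.ae_differentiableAt (μ := volume), hae0, haeL] with s hdiff hs0 hsL hsIcc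
  have hsIoo : s ∈ Ioo (0:ℝ) L := ⟨lt_of_le_of_ne hsIcc.1 (Ne.symm hs0), lt_of_le_of_ne hsIcc.2 hsL⟩
  have hx0 : 0 < x s := by
    rw [← hxeq s hsIcc]; exact hxpos s hsIoo
  -- pointwise inequality
  by_cases hsin : Real.sin (ψ s) = 0
  · -- sin vanishes: bound |F'| ≤ |ψ'|
    have hsF : Real.sin (F s) = 0 := by rw [hFdef]; simp [sin_fold, hsin]
    have key : deriv F s * x s ≤ |deriv ψ s| * x s := by
      by_cases hdF : DifferentiableAt ℝ F s
      · have h1 : |deriv F s| ≤ |deriv ψ s| :=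
          abs_deriv_le hdF.hasDerivAt hdiff.hasDerivAt (fun t => fold_dist (ψ t) (ψ s))
        calc deriv F s * x s ≤ |deriv F s| * x s :=
              mul_le_mul_of_nonneg_right (le_abs_self _) hx0.le
          _ ≤ |deriv ψ s| * x s := mul_le_mul_of_nonneg_right h1 hx0.le
      · rw [deriv_zero_of_not_differentiableAt hdF, zero_mul]
        positivity
    calc f s = deriv F s * x s := by rw [hfdef]; simp [hsF]
      _ ≤ |deriv ψ s| * x s := key
      _ = |deriv ψ s * x s| := by rw [abs_mul, abs_of_pos hx0]
      _ = g s := by rw [hgdef]; simp [hsin]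
  · -- sin nonzero: locally fold ∘ ψ = ± (ψ - 2πk)
    set u := ψ s with hu
    set k : ℤ := round (u / (2*π)) with hk
    set d := u - 2*π*k with hd
    have hsind : Real.sin d = Real.sin u := by
      rw [hd]
      have h := Real.sin_add_int_mul_two_pi (u - 2*π*k) k
      have he : u - 2*π*k + k*(2*π) = u := by ring
      rw [he] at h; exact h.symm
    have hdne : d ≠ 0 := by
      intro h; apply hsin; rw [← hsind, h, Real.sin_zero]
    have hdlt : |d| < π := by
      rcases lt_or_eq_of_le (fold_mem u).2 with h | h
      · simpa [fold, ← hk] using h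
      · exfalso
        apply hsin
        rw [← hsind]
        have : |d| = π := by simpa [fold, ← hk] using h
        rcases abs_eq (le_of_lt Real.pi_pos) |>.mp this with h' | h'
        · rw [h', Real.sin_pi]
        · rw [h', Real.sin_neg, Real.sin_pi, neg_zero]
    set ε : ℝ := if 0 < d then 1 else -1 with hε
    have hfold_local : ∀ v : ℝ, |v - u| < min |d| (π - |d|) → fold v = ε * (v - 2*π*k) := by
      intro v hv
      have hv1 : |v - u| < |d| := lt_of_lt_of_le hv (min_le_left _ _)
      have hv2 : |v - u| < π - |d| := lt_of_lt_of_le hv (min_le_right _ _)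
      have hvd : |(v - 2*π*k) - d| < |d| := by
        have : (v - 2*π*k) - d = v - u := by rw [hd]; ring
        rwa [this]
      have hvπ : |v - 2*π*k| < π := by
        calc |v - 2*π*k| ≤ |(v - 2*π*k) - d| + |d| := by
              have := abs_sub_abs_le_abs_sub (v - 2*π*k) d
              have h2 := abs_sub_le (v - 2*π*k) d 0
              simpa using h2
          _ < (π - |d|) + |d| := by
              have : |(v - 2*π*k) - d| < π - |d| := by
                have : (v - 2*π*k) - d = v - u := by rw [hd]; ring
                rwa [this]
              linarith
          _ = π := by ring
      have hround : round (v / (2*π)) = k := by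
        apply round_eq_of_abs_lt
        have hπ : (0:ℝ) < 2*π := by positivity
        have h2 : |v - 2*π*k| = (2*π) * |v/(2*π) - (k:ℝ)| := fold_eq v k
        have : |v/(2*π) - (k:ℝ)| = |v - 2*π*k| / (2*π) := by
          rw [h2]; field_simp
        rw [this]
        rw [div_lt_iff₀ hπ]
        calc |v - 2*π*k| < π := hvπ
          _ = 1/2 * (2*π) := by ring
      have hsign : |v - 2*π*k| = ε * (v - 2*π*k) := by
        rcases lt_or_gt_of_ne hdne with hneg | hpos
        · have hvneg : v - 2*π*k < 0 := by
            rcases abs_lt.mp hvd with ⟨h1, h2⟩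
            rw [abs_of_neg hneg] at h1 h2
            linarith
          rw [abs_of_neg hvneg, hε, if_neg (by linarith)]
          ring
        · have hvpos : 0 < v - 2*π*k := by
            rcases abs_lt.mp hvd with ⟨h1, h2⟩
            rw [abs_of_pos hpos] at h1 h2
            linarith
          rw [abs_of_pos hvpos, hε, if_pos hpos]
          ring
      rw [fold, hround, hsign]
    have hδpos : 0 < min |d| (π - |d|) := lt_min (abs_pos.mpr hdne) (by linarith)
    have hevF : F =ᶠ[nhds s] fun t => ε * (ψ t - 2*π*k) := by
      have hcont_at : ContinuousAt ψ s := hψc.continuousAt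
      have : ∀ᶠ t in nhds s, |ψ t - u| < min |d| (π - |d|) := by
        have := Metric.continuousAt_iff.mp hcont_at (min |d| (π - |d|)) hδpos
        rcases this with ⟨δ, hδ, hδ'⟩
        filter_upwards [Metric.ball_mem_nhds s hδ] with t ht
        have := hδ' ht
        rwa [Real.dist_eq] at this
      filter_upwards [this] with t ht
      exact hfold_local (ψ t) ht
    have hderivF : deriv F s = ε * deriv ψ s := by
      rw [hevF.deriv_eq]
      have : HasDerivAt (fun t => ε * (ψ t - 2*π*k)) (ε * deriv ψ s) s :=
        ((hdiff.hasDerivAt.sub_const _).const_mul ε)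
      exact this.deriv
    have hsinF : Real.sin (F s) = ε * Real.sin u := by
      have h1 : Real.sin (F s) = |Real.sin u| := sin_fold u
      have h2 : Real.sin u = Real.sin d := hsind.symm
      rcases lt_or_gt_of_ne hdne with hneg | hpos
      · have : Real.sin d < 0 := by
          apply Real.sin_neg_of_neg_of_neg_pi_lt hneg
          rcases abs_lt.mp hdlt with ⟨h3, _⟩
          linarith
        rw [h1, h2, abs_of_neg this, hε, if_neg (by linarith)]
        ring
      · have : 0 < Real.sin d := by
          apply Real.sin_pos_of_pos_of_lt_pi hpos
          rcases abs_lt.mp hdlt with ⟨_, h3⟩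
          rw [abs_of_pos hpos] at hdlt
          linarith
        rw [h1, h2, abs_of_pos this, hε, if_pos hpos]
        ring
    have hεabs : ∀ a : ℝ, ε * a ≤ |a| := by
      intro a
      rcases le_or_gt 0 d with h | h
      · rw [hε, if_pos (lt_of_le_of_ne h (Ne.symm hdne))]; simpa using le_abs_self a
      · rw [hε, if_neg (not_lt.mpr h.le)]; simpa using neg_le_abs a
    calc f s = ε * (Real.sin u + deriv ψ s * x s) := by
          rw [hfdef]; simp only [hsinF, hderivF]; ring
      _ ≤ |Real.sin u + deriv ψ s * x s| := hεabs _
      _ = g s := by rw [hgdef]
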